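/- Let (xᵏ, zᵏ, yᵏ)_{k≥0} be a sequence generated by the variable-metric ADMM algorithm. Then for all k ≥ 0 and all (x, z, y) ∈ H × G × G: l(x^{k+1}, z^{k+1}, y) ≤ l(x, z, y^{k+1}) + c⟨z^{k+1} − zᵏ, A(x − x^{k+1})⟩ + (1/2)(‖x − xᵏ‖²_{M₁ᵏ} + ‖z − zᵏ‖²_{M₂ᵏ} + c⁻¹‖y − yᵏ‖²) − (1/2)(‖x − x^{k+1}‖²_{M₁ᵏ} + ‖z − z^{k+1}‖²_{M₂ᵏ} + c⁻¹‖y − y^{k+1}‖²) − (1/2)(‖x^{k+1} − xᵏ‖²_{M₁ᵏ} − L‖x^{k+1} − xᵏ‖² + ‖z^{k+1} − zᵏ‖²_{M₂ᵏ} + c⁻¹‖y^{k+1} − yᵏ‖²). -/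

import Mathlib

open scoped InnerProductSpace
open Filter

noncomputable section

section OpDefs

variable {E F : Type*} [NormedAddCommGroup E] [InnerProductSpace ℝ E]
  [NormedAddCommGroup F] [InnerProductSpace ℝ F]

/-- `U ∈ S₊(E)`: continuous linear, self-adjoint and positive semidefinite. -/
def IsSplusOp (U : E →L[ℝ] E) : Prop :=
  (∀ x y : E, ⟪U x, y⟫_ℝ = ⟪x, U y⟫_ℝ) ∧ ∀ x : E, 0 ≤ ⟪x, U x⟫_ℝ

/-- The squared seminorm `‖x‖²_U := ⟪x, U x⟫`. -/
def opSq (U : E →L[ℝ] E) (x : E) : ℝ := ⟪x, U x⟫_ℝ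

/-- Loewner order `U ⪰ V`. -/
def opLE (U V : E →L[ℝ] E) : Prop := ∀ x : E, ⟪x, V x⟫_ℝ ≤ ⟪x, U x⟫_ℝ

/-- `U ∈ P_α(E)`, i.e. `U ∈ S₊(E)` and `U ⪰ α·Id`. -/
def IsPalphaOp (α : ℝ) (U : E →L[ℝ] E) : Prop :=
  IsSplusOp U ∧ ∀ x : E, α * ‖x‖ ^ 2 ≤ ⟪x, U x⟫_ℝ

/-- Properness of an extended-real-valued function. -/
def ERealProper (f : E → EReal) : Prop := (∀ x, f x ≠ ⊥) ∧ ∃ x, f x ≠ ⊤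

/-- Convexity of an extended-real-valued function. -/
def ERealConvex (f : E → EReal) : Prop :=
  ∀ x y : E, ∀ a b : ℝ, 0 ≤ a → 0 ≤ b → a + b = 1 →
    f (a • x + b • y) ≤ (a : EReal) * f x + (b : EReal) * f y

/-- Weak convergence of a sequence in a Hilbert space, tested against inner products. -/
def WeakConv (u : ℕ → E) (p : E) : Prop :=
  ∀ w : E, Tendsto (fun k => ⟪u k, w⟫_ℝ) atTop (nhds ⟪p, w⟫_ℝ)

/-- The Lagrangian `l(x,z,y) = f(x) + g(z) + ⟪y, Ax - z⟫`. -/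
def Lagr (f : E → EReal) (g : F → EReal) (A : E →L[ℝ] F) (p : E) (q v : F) : EReal :=
  f p + g q + ((⟪v, A p - q⟫_ℝ : ℝ) : EReal)

/-- The Lagrangian with an additional smooth summand `h`:
`l(x,z,y) = f(x) + h(x) + g(z) + ⟪y, Ax - z⟫`. -/
def LagrH (f : E → EReal) (h : E → ℝ) (g : F → EReal) (A : E →L[ℝ] F)
    (p : E) (q v : F) : EReal :=
  f p + ((h p : ℝ) : EReal) + g q + ((⟪v, A p - q⟫_ℝ : ℝ) : EReal)

/-- `(xs, zs, ys)` is a saddle point of `l`. -/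
def IsSaddle (l : E → F → F → EReal) (xs : E) (zs ys : F) : Prop :=
  ∀ (p : E) (q v : F), l xs zs v ≤ l xs zs ys ∧ l xs zs ys ≤ l p q ys

/-- `xk1` is a minimizer of `u ↦ f u + (c/2)‖Au - zk + c⁻¹ yk‖² + (1/2)‖u - xk‖²_M`. -/
def IsXUpdate (f : E → EReal) (A : E →L[ℝ] F) (c : ℝ) (M : E →L[ℝ] E)
    (xk : E) (zk yk : F) (xk1 : E) : Prop :=
  ∀ u : E,
    f xk1 + (((c/2) * ‖A xk1 - zk + c⁻¹ • yk‖ ^ 2 + (1/2) * opSq M (xk1 - xk) : ℝ) : EReal) ≤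
    f u + (((c/2) * ‖A u - zk + c⁻¹ • yk‖ ^ 2 + (1/2) * opSq M (u - xk) : ℝ) : EReal)

/-- `xk1` is a minimizer of the `x`-subproblem with linearized smooth part:
`u ↦ f u + ⟪u - xk, ∇h(xk)⟫ + (c/2)‖Au - zk + c⁻¹ yk‖² + (1/2)‖u - xk‖²_M`. -/
def IsXUpdateGrad (f : E → EReal) (h' : E → E) (A : E →L[ℝ] F) (c : ℝ) (M : E →L[ℝ] E)
    (xk : E) (zk yk : F) (xk1 : E) : Prop :=
  ∀ u : E,
    f xk1 + ((⟪xk1 - xk, h' xk⟫_ℝ + (c/2) * ‖A xk1 - zk + c⁻¹ • yk‖ ^ 2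
        + (1/2) * opSq M (xk1 - xk) : ℝ) : EReal) ≤
    f u + ((⟪u - xk, h' xk⟫_ℝ + (c/2) * ‖A u - zk + c⁻¹ • yk‖ ^ 2
        + (1/2) * opSq M (u - xk) : ℝ) : EReal)

/-- `zk1` is a minimizer of `w ↦ g w + (c/2)‖Ax - w + c⁻¹ yk‖² + (1/2)‖w - zk‖²_M`. -/
def IsZUpdate (g : F → EReal) (c : ℝ) (M : F →L[ℝ] F)
    (Ax zk yk zk1 : F) : Prop :=
  ∀ w : F,
    g zk1 + (((c/2) * ‖Ax - zk1 + c⁻¹ • yk‖ ^ 2 + (1/2) * opSq M (zk1 - zk) : ℝ) : EReal) ≤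
    g w + (((c/2) * ‖Ax - w + c⁻¹ • yk‖ ^ 2 + (1/2) * opSq M (w - zk) : ℝ) : EReal)


end OpDefs

section AuxLemmas

open Set Topology

variable {E F : Type*} [NormedAddCommGroup E] [InnerProductSpace ℝ E]
  [NormedAddCommGroup F] [InnerProductSpace ℝ F]

lemma opSq_add' (M : E →L[ℝ] E) (hM : ∀ a b : E, ⟪M a, b⟫_ℝ = ⟪a, M b⟫_ℝ)
    (u w : E) : opSq M (u + w) = opSq M u + opSq M w + 2 * ⟪u, M w⟫_ℝ := by
  have hsym : ⟪w, M u⟫_ℝ = ⟪u, M w⟫_ℝ := by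
    rw [← hM u w, real_inner_comm]
  simp only [opSq, map_add, inner_add_left, inner_add_right, hsym]
  ring

lemma convex_grad_ineq [CompleteSpace E] (h : E → ℝ) (hconv : ConvexOn ℝ Set.univ h) (h' : E → E)
    (hgrad : ∀ p, HasGradientAt h (h' p) p) (a p : E) :
    h a + ⟪p - a, h' a⟫_ℝ ≤ h p := by
  set w := p - a with hw
  have hF : HasDerivAt (fun t : ℝ => a + t • w) w 0 := by
    simpa using ((hasDerivAt_id (0:ℝ)).smul_const w).const_add a
  have hd : HasDerivAt (fun t : ℝ => h (a + t • w)) ⟪h' a, w⟫_ℝ 0 := by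
    have h1 : HasFDerivAt h (InnerProductSpace.toDual ℝ E (h' (a + (0:ℝ) • w)))
        (a + (0:ℝ) • w) := hgrad _
    have h2 := h1.comp_hasDerivAt (x := (0:ℝ)) hF
    simp [InnerProductSpace.toDual_apply_apply] at h2; exact h2
  have hslope := hasDerivAt_iff_tendsto_slope.1 hd
  have hmono : (𝓝[>] (0:ℝ)) ≤ 𝓝[≠] (0:ℝ) :=
    nhdsWithin_mono _ (fun t ht => ne_of_gt ht)
  have hbound : ∀ᶠ t in 𝓝[>] (0:ℝ),
      slope (fun t : ℝ => h (a + t • w)) 0 t ≤ h p - h a := by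
    filter_upwards [Ioc_mem_nhdsGT_of_mem (show (0:ℝ) ∈ Ico 0 1 by norm_num)] with t ht
    have ht0 : 0 < t := ht.1
    have hcomb : a + t • w = (1 - t) • a + t • p := by
      rw [hw]; module
    have hcv := hconv.2 (mem_univ a) (mem_univ p) (by linarith [ht.2] : (0:ℝ) ≤ 1 - t)
      ht0.le (by ring)
    rw [← hcomb] at hcv
    have hsl : slope (fun t : ℝ => h (a + t • w)) 0 t = (h (a + t • w) - h a) / t := by
      rw [slope_def_field]; norm_num
    rw [hsl, div_le_iff₀ ht0]
    calc h (a + t • w) - h a ≤ (1 - t) * h a + t * h p - h a := by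
          have := hcv; simp only [smul_eq_mul] at this; linarith
      _ = (h p - h a) * t := by ring
  have := le_of_tendsto (hslope.mono_left hmono) hbound
  have hcm : ⟪p - a, h' a⟫_ℝ = ⟪h' a, w⟫_ℝ := by rw [hw, real_inner_comm]
  linarith [this, hcm.le, hcm.ge]

lemma descent_ineq [CompleteSpace E] (h : E → ℝ) (h' : E → E)
    (hgrad : ∀ p, HasGradientAt h (h' p) p)
    (L : ℝ) (hL : 0 < L) (hlip : LipschitzWith (Real.toNNReal L) h') (a u : E) :
    h u ≤ h a + ⟪u - a, h' a⟫_ℝ + (L / 2) * ‖u - a‖ ^ 2 := by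
  set w := u - a with hw
  set φ' : ℝ → ℝ := fun t => ⟪h' (a + t • w), w⟫_ℝ with hφ'
  have hF : ∀ t : ℝ, HasDerivAt (fun t : ℝ => a + t • w) w t := by
    intro t
    simpa using ((hasDerivAt_id t).smul_const w).const_add a
  have hd : ∀ t : ℝ, HasDerivAt (fun t : ℝ => h (a + t • w)) (φ' t) t := by
    intro t
    have h1 : HasFDerivAt h (InnerProductSpace.toDual ℝ E (h' (a + t • w))) (a + t • w) :=
      hgrad _
    have h2 := h1.comp_hasDerivAt (x := t) (hF t)
    simp [InnerProductSpace.toDual_apply_apply, hφ'] at h2; exact h2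
  set g : ℝ → ℝ := fun t => h (a + t • w) - t * φ' 0 - L / 2 * t ^ 2 * ‖w‖ ^ 2 with hg
  have hgd : ∀ t : ℝ, HasDerivAt g (φ' t - φ' 0 - L * t * ‖w‖ ^ 2) t := by
    intro t
    have h3 : HasDerivAt (fun t : ℝ => t * φ' 0) (φ' 0) t := by
      simpa using (hasDerivAt_id t).mul_const (φ' 0)
    have h4 : HasDerivAt (fun t : ℝ => L / 2 * t ^ 2 * ‖w‖ ^ 2) (L * t * ‖w‖ ^ 2) t := by
      have := ((hasDerivAt_pow 2 t).const_mul (L / 2)).mul_const (‖w‖ ^ 2)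
      exact this.congr_deriv (by rw [show (2:ℕ) - 1 = 1 from rfl]; push_cast; ring)
    exact ((hd t).sub h3).sub h4
  have hanti : AntitoneOn g (Icc (0:ℝ) 1) := by
    apply antitoneOn_of_deriv_nonpos (convex_Icc 0 1)
    · exact (fun t _ => ((hgd t).differentiableAt).continuousAt.continuousWithinAt)
    · intro t _
      exact ((hgd t).differentiableAt).differentiableWithinAt
    · intro t ht
      rw [interior_Icc] at ht
      rw [(hgd t).deriv]
      have hlp : ‖h' (a + t • w) - h' a‖ ≤ L * (t * ‖w‖) := by
        have := hlip.dist_le_mul (a + t • w) a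
        rw [dist_eq_norm, dist_eq_norm] at this
        have h5 : a + t • w - a = t • w := by abel
        rw [h5] at this
        rw [Real.coe_toNNReal L hL.le] at this
        calc ‖h' (a + t • w) - h' a‖ ≤ L * ‖t • w‖ := this
          _ = L * (t * ‖w‖) := by
              rw [norm_smul, Real.norm_eq_abs, abs_of_pos ht.1]
      have hcs : φ' t - φ' 0 ≤ ‖h' (a + t • w) - h' a‖ * ‖w‖ := by
        have : φ' t - φ' 0 = ⟪h' (a + t • w) - h' a, w⟫_ℝ := by
          simp [hφ', inner_sub_left]
        rw [this]
        exact real_inner_le_norm _ _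
      have : φ' t - φ' 0 ≤ L * t * ‖w‖ ^ 2 := by
        calc φ' t - φ' 0 ≤ ‖h' (a + t • w) - h' a‖ * ‖w‖ := hcs
          _ ≤ L * (t * ‖w‖) * ‖w‖ := by
              apply mul_le_mul_of_nonneg_right hlp (norm_nonneg _)
          _ = L * t * ‖w‖ ^ 2 := by ring
      linarith
  have := hanti (show (0:ℝ) ∈ Icc (0:ℝ) 1 by norm_num)
    (show (1:ℝ) ∈ Icc (0:ℝ) 1 by norm_num) zero_le_one
  have hg0 : g 0 = h a := by simp [hg]
  have hg1 : g 1 = h (a + w) - φ' 0 - L / 2 * ‖w‖ ^ 2 := by norm_num [hg]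
  rw [hg0, hg1] at this
  have haw : a + w = u := by rw [hw]; abel
  have hφ0 : φ' 0 = ⟪u - a, h' a⟫_ℝ := by
    simp [hφ', hw]
    rw [real_inner_comm]
  rw [haw, hφ0] at this
  linarith

lemma quadMin_subgrad (f : E → EReal) (hfc : ERealConvex f) (hbot : ∀ u, f u ≠ ⊥)
    (B : E →L[ℝ] F) (c : ℝ) (hc : 0 < c)
    (M : E →L[ℝ] E) (hMsym : ∀ a b : E, ⟪M a, b⟫_ℝ = ⟪a, M b⟫_ℝ)
    (hMpos : ∀ a : E, 0 ≤ ⟪a, M a⟫_ℝ)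
    (d x0 x1 : E) (s : F)
    (hmin : ∀ u : E,
      f x1 + ((⟪x1 - x0, d⟫_ℝ + (c/2) * ‖B x1 - s‖ ^ 2 + (1/2) * opSq M (x1 - x0) : ℝ) : EReal) ≤
      f u + ((⟪u - x0, d⟫_ℝ + (c/2) * ‖B u - s‖ ^ 2 + (1/2) * opSq M (u - x0) : ℝ) : EReal))
    (p : E) (hpt : f p ≠ ⊤) :
    f x1 ≠ ⊤ ∧
      (f x1).toReal ≤ (f p).toReal + (⟪p - x1, d⟫_ℝ
        + c * ⟪B (p - x1), B x1 - s⟫_ℝ + ⟪p - x1, M (x1 - x0)⟫_ℝ) := by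
  set b := (f p).toReal with hb
  have hfpc : f p = (b : EReal) := (EReal.coe_toReal hpt (hbot p)).symm
  set r1 : ℝ := ⟪x1 - x0, d⟫_ℝ + (c/2) * ‖B x1 - s‖ ^ 2 + (1/2) * opSq M (x1 - x0) with hr1
  have hxt : f x1 ≠ ⊤ := by
    intro htop
    have h2 := hmin p
    rw [htop, hfpc, ← EReal.coe_add, EReal.top_add_coe] at h2
    exact EReal.coe_ne_top _ (top_le_iff.1 h2)
  refine ⟨hxt, ?_⟩
  set a := (f x1).toReal with ha
  have hfxc : f x1 = (a : EReal) := (EReal.coe_toReal hxt (hbot x1)).symm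
  set w := p - x1 with hw
  set D : ℝ := ⟪w, d⟫_ℝ + c * ⟪B w, B x1 - s⟫_ℝ + ⟪w, M (x1 - x0)⟫_ℝ with hD
  set Q : ℝ := (c/2) * ‖B w‖ ^ 2 + (1/2) * opSq M w with hQdef
  have hQ : 0 ≤ Q := by
    have := hMpos w
    have h1 : (0:ℝ) ≤ (c/2) * ‖B w‖ ^ 2 := by positivity
    simp only [hQdef, opSq]
    linarith
  have key : ∀ t : ℝ, 0 < t → t ≤ 1 → a ≤ b + D + t * Q := by
    intro t ht0 ht1
    set u := x1 + t • w with hu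
    have hcomb : (1 - t) • x1 + t • p = u := by rw [hu, hw]; module
    have hconv := hfc x1 p (1 - t) t (by linarith) ht0.le (by ring)
    rw [hcomb, hfxc, hfpc, ← EReal.coe_mul, ← EReal.coe_mul, ← EReal.coe_add] at hconv
    have hut : f u ≠ ⊤ := by
      intro htop; rw [htop] at hconv
      exact EReal.coe_ne_top _ (top_le_iff.1 hconv)
    have hfuc : f u = ((f u).toReal : EReal) := (EReal.coe_toReal hut (hbot u)).symm
    set ft := (f u).toReal with hft
    have h1 : ft ≤ (1 - t) * a + t * b := by
      rw [hfuc] at hconv; exact_mod_cast hconv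
    have h2 := hmin u
    rw [hfxc, hfuc, ← EReal.coe_add, ← EReal.coe_add] at h2
    have h2r : a + r1 ≤ ft + (⟪u - x0, d⟫_ℝ + (c/2) * ‖B u - s‖ ^ 2
        + (1/2) * opSq M (u - x0)) := by exact_mod_cast h2
    have e1 : u - x0 = (x1 - x0) + t • w := by rw [hu]; abel
    have e2 : B u - s = (B x1 - s) + t • (B w) := by
      rw [hu]; simp only [map_add, map_smul]; abel
    have eInner : ⟪u - x0, d⟫_ℝ = ⟪x1 - x0, d⟫_ℝ + t * ⟪w, d⟫_ℝ := by
      rw [e1, inner_add_left, real_inner_smul_left]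
    have eNorm : ‖B u - s‖ ^ 2 = ‖B x1 - s‖ ^ 2 + 2 * t * ⟪B x1 - s, B w⟫_ℝ
        + t ^ 2 * ‖B w‖ ^ 2 := by
      rw [e2, norm_add_sq_real, real_inner_smul_right, norm_smul, Real.norm_eq_abs,
        mul_pow, sq_abs]
      ring
    have eSq : opSq M (u - x0) = opSq M (x1 - x0) + t ^ 2 * opSq M w
        + 2 * t * ⟪x1 - x0, M w⟫_ℝ := by
      rw [e1, opSq_add' M hMsym]
      have : opSq M (t • w) = t ^ 2 * opSq M w := by
        simp only [opSq, map_smul, real_inner_smul_left, real_inner_smul_right]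
        ring
      rw [this, map_smul, real_inner_smul_right]
      ring
    have eD1 : ⟪B x1 - s, B w⟫_ℝ = ⟪B w, B x1 - s⟫_ℝ := real_inner_comm _ _
    have eD2 : ⟪x1 - x0, M w⟫_ℝ = ⟪w, M (x1 - x0)⟫_ℝ := by
      rw [← hMsym w (x1 - x0), real_inner_comm]
    have hexp : ⟪u - x0, d⟫_ℝ + (c/2) * ‖B u - s‖ ^ 2 + (1/2) * opSq M (u - x0)
        = r1 + t * D + t ^ 2 * Q := by
      rw [eInner, eNorm, eSq, eD1, eD2, hr1, hD, hQdef]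
      ring
    rw [hexp] at h2r
    have h5 : a ≤ (1 - t) * a + t * b + t * D + t ^ 2 * Q := by linarith
    have h7 : 0 ≤ t * (b + D + t * Q - a) := by nlinarith [h5]
    have h8 : 0 ≤ b + D + t * Q - a := (mul_nonneg_iff_of_pos_left ht0).1 h7
    linarith
  refine _root_.le_of_forall_pos_le_add fun ε hε => ?_
  have hQ1 : (0:ℝ) < Q + 1 := by linarith
  set t := min 1 (ε / (Q + 1)) with htdef
  have ht0 : 0 < t := lt_min one_pos (div_pos hε hQ1)
  have hkey := key t ht0 (min_le_left _ _)
  have htQ : t * Q ≤ ε := by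
    have h5 : t ≤ ε / (Q + 1) := min_le_right _ _
    have h6 : t * Q ≤ (ε / (Q + 1)) * Q := mul_le_mul_of_nonneg_right h5 hQ
    have h7 : (ε / (Q + 1)) * Q ≤ ε := by
      rw [div_mul_eq_mul_div, div_le_iff₀ hQ1]
      nlinarith
    exact h6.trans h7
  linarith

end AuxLemmas



theorem stmt6 {H G : Type*}
    [NormedAddCommGroup H] [InnerProductSpace ℝ H] [CompleteSpace H]
    [NormedAddCommGroup G] [InnerProductSpace ℝ G] [CompleteSpace G]
    (f : H → EReal) (g : G → EReal)
    (hfp : ERealProper f) (hfc : ERealConvex f) (hfl : LowerSemicontinuous f)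
    (hgp : ERealProper g) (hgc : ERealConvex g) (hgl : LowerSemicontinuous g)
    (h : H → ℝ) (h' : H → H) (L : ℝ) (hL : 0 < L)
    (hconv : ConvexOn ℝ Set.univ h)
    (hgrad : ∀ p : H, HasGradientAt h (h' p) p)
    (hlip : LipschitzWith (Real.toNNReal L) h')
    (A : H →L[ℝ] G) (c : ℝ) (hc : 0 < c)
    (M₁ : ℕ → (H →L[ℝ] H)) (M₂ : ℕ → (G →L[ℝ] G))
    (hM₁ : ∀ k : ℕ, IsSplusOp (M₁ k)) (hM₂ : ∀ k : ℕ, IsSplusOp (M₂ k))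
    (x : ℕ → H) (z y : ℕ → G)
    (hx : ∀ k : ℕ, IsXUpdateGrad f h' A c (M₁ k) (x k) (z k) (y k) (x (k+1)))
    (hz : ∀ k : ℕ, IsZUpdate g c (M₂ k) (A (x (k+1))) (z k) (y k) (z (k+1)))
    (hy : ∀ k : ℕ, y (k+1) = y k + c • (A (x (k+1)) - z (k+1))) :
    ∀ k : ℕ, ∀ (p : H) (q v : G),
      LagrH f h g A (x (k+1)) (z (k+1)) v ≤
        LagrH f h g A p q (y (k+1)) +
          ((c * ⟪z (k+1) - z k, A (p - x (k+1))⟫_ℝ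
            + (1/2) * (opSq (M₁ k) (p - x k) + opSq (M₂ k) (q - z k) + c⁻¹ * ‖v - y k‖ ^ 2)
            - (1/2) * (opSq (M₁ k) (p - x (k+1)) + opSq (M₂ k) (q - z (k+1))
                + c⁻¹ * ‖v - y (k+1)‖ ^ 2)
            - (1/2) * (opSq (M₁ k) (x (k+1) - x k) - L * ‖x (k+1) - x k‖ ^ 2
                + opSq (M₂ k) (z (k+1) - z k) + c⁻¹ * ‖y (k+1) - y k‖ ^ 2) : ℝ) : EReal) := by
  obtain ⟨hfbot, -⟩ := hfp
  obtain ⟨hgbot, -⟩ := hgp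
  intro k p q v
  by_cases hpt : f p = ⊤
  · have hrhs : LagrH f h g A p q (y (k+1)) = ⊤ := by
      simp [LagrH, hpt, EReal.top_add_coe, EReal.top_add_of_ne_bot (hgbot q)]
    rw [hrhs, EReal.top_add_coe]
    exact le_top
  by_cases hqt : g q = ⊤
  · have hrhs : LagrH f h g A p q (y (k+1)) = ⊤ := by
      have h1 : f p + ((h p : ℝ) : EReal) ≠ ⊥ := by
        simp [EReal.add_eq_bot_iff, hfbot p]
      simp [LagrH, hqt, EReal.add_top_of_ne_bot h1, EReal.top_add_coe]
    rw [hrhs, EReal.top_add_coe]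
    exact le_top
  -- x-subproblem in generic form
  have ex : ∀ u : H, A u - z k + c⁻¹ • y k = A u - (z k - c⁻¹ • y k) := fun u => by abel
  have hxmin : ∀ u : H,
      f (x (k+1)) + ((⟪x (k+1) - x k, h' (x k)⟫_ℝ
        + (c/2) * ‖A (x (k+1)) - (z k - c⁻¹ • y k)‖ ^ 2
        + (1/2) * opSq (M₁ k) (x (k+1) - x k) : ℝ) : EReal) ≤
      f u + ((⟪u - x k, h' (x k)⟫_ℝ + (c/2) * ‖A u - (z k - c⁻¹ • y k)‖ ^ 2
        + (1/2) * opSq (M₁ k) (u - x k) : ℝ) : EReal) := by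
    intro u
    have h0 := hx k u
    simp only [ex] at h0
    exact h0
  obtain ⟨hXt, hFineq⟩ := quadMin_subgrad f hfc hfbot A c hc (M₁ k) (hM₁ k).1 (hM₁ k).2
    (h' (x k)) (x k) (x (k+1)) (z k - c⁻¹ • y k) hxmin p hpt
  -- z-subproblem in generic form
  have ez : ∀ u : G, (-(ContinuousLinearMap.id ℝ G)) u - (-(A (x (k+1)) + c⁻¹ • y k))
      = A (x (k+1)) - u + c⁻¹ • y k := by
    intro u
    simp only [ContinuousLinearMap.neg_apply, ContinuousLinearMap.coe_id', id_eq]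
    abel
  have hzmin : ∀ u : G,
      g (z (k+1)) + ((⟪z (k+1) - z k, (0:G)⟫_ℝ
        + (c/2) * ‖(-(ContinuousLinearMap.id ℝ G)) (z (k+1)) - (-(A (x (k+1)) + c⁻¹ • y k))‖ ^ 2
        + (1/2) * opSq (M₂ k) (z (k+1) - z k) : ℝ) : EReal) ≤
      g u + ((⟪u - z k, (0:G)⟫_ℝ
        + (c/2) * ‖(-(ContinuousLinearMap.id ℝ G)) u - (-(A (x (k+1)) + c⁻¹ • y k))‖ ^ 2
        + (1/2) * opSq (M₂ k) (u - z k) : ℝ) : EReal) := by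
    intro u
    simp only [ez, inner_zero_right, zero_add]
    exact hz k u
  obtain ⟨hZt, hGineq⟩ := quadMin_subgrad g hgc hgbot (-(ContinuousLinearMap.id ℝ G)) c hc
    (M₂ k) (hM₂ k).1 (hM₂ k).2 (0:G) (z k) (z (k+1)) (-(A (x (k+1)) + c⁻¹ • y k)) hzmin q hqt
  -- simplify hGineq
  have v1 : (-(ContinuousLinearMap.id ℝ G)) (q - z (k+1)) = z (k+1) - q := by
    simp [neg_sub]
  have v2 : (-(ContinuousLinearMap.id ℝ G)) (z (k+1)) - (-(A (x (k+1)) + c⁻¹ • y k))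
      = A (x (k+1)) - z (k+1) + c⁻¹ • y k := ez _
  rw [v1, v2, inner_zero_right, zero_add] at hGineq
  -- everything is real now
  have hfXc : f (x (k+1)) = (((f (x (k+1))).toReal : ℝ) : EReal) :=
    (EReal.coe_toReal hXt (hfbot _)).symm
  have hgZc : g (z (k+1)) = (((g (z (k+1))).toReal : ℝ) : EReal) :=
    (EReal.coe_toReal hZt (hgbot _)).symm
  have hfpc : f p = (((f p).toReal : ℝ) : EReal) := (EReal.coe_toReal hpt (hfbot _)).symm
  have hgqc : g q = (((g q).toReal : ℝ) : EReal) := (EReal.coe_toReal hqt (hgbot _)).symm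
  simp only [LagrH]
  rw [hfXc, hgZc, hfpc, hgqc]
  set aX := (f (x (k+1))).toReal
  set bZ := (g (z (k+1))).toReal
  set ap := (f p).toReal
  set bq := (g q).toReal
  rw [← EReal.coe_add, ← EReal.coe_add, ← EReal.coe_add, ← EReal.coe_add, ← EReal.coe_add,
    ← EReal.coe_add, ← EReal.coe_add]
  rw [EReal.coe_le_coe_iff]
  -- real inequality
  have hcne : c ≠ 0 := ne_of_gt hc
  have hconv1 : h (x k) + ⟪p - x k, h' (x k)⟫_ℝ ≤ h p :=
    convex_grad_ineq h hconv h' hgrad (x k) p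
  have hdesc : h (x (k+1)) ≤ h (x k) + ⟪x (k+1) - x k, h' (x k)⟫_ℝ
      + (L / 2) * ‖x (k+1) - x k‖ ^ 2 :=
    descent_ineq h h' hgrad L hL hlip (x k) (x (k+1))
  have I1 : opSq (M₁ k) (p - x k) = opSq (M₁ k) (p - x (k+1)) + opSq (M₁ k) (x (k+1) - x k)
      + 2 * ⟪p - x (k+1), (M₁ k) (x (k+1) - x k)⟫_ℝ := by
    have := opSq_add' (M₁ k) (hM₁ k).1 (p - x (k+1)) (x (k+1) - x k)
    rwa [show p - x (k+1) + (x (k+1) - x k) = p - x k from by abel] at this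
  have I2 : opSq (M₂ k) (q - z k) = opSq (M₂ k) (q - z (k+1)) + opSq (M₂ k) (z (k+1) - z k)
      + 2 * ⟪q - z (k+1), (M₂ k) (z (k+1) - z k)⟫_ℝ := by
    have := opSq_add' (M₂ k) (hM₂ k).1 (q - z (k+1)) (z (k+1) - z k)
    rwa [show q - z (k+1) + (z (k+1) - z k) = q - z k from by abel] at this
  have I4 : ⟪v - y (k+1), y (k+1) - y k⟫_ℝ
      = c * ⟪v - y (k+1), A (x (k+1)) - z (k+1)⟫_ℝ := by
    rw [hy k, show y k + c • (A (x (k+1)) - z (k+1)) - y k = c • (A (x (k+1)) - z (k+1))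
      from by abel, real_inner_smul_right]
  have I3 : c⁻¹ * ‖v - y k‖ ^ 2 = c⁻¹ * ‖v - y (k+1)‖ ^ 2
      + 2 * ⟪v - y (k+1), A (x (k+1)) - z (k+1)⟫_ℝ + c⁻¹ * ‖y (k+1) - y k‖ ^ 2 := by
    have hn := norm_add_sq_real (v - y (k+1)) (y (k+1) - y k)
    rw [show v - y (k+1) + (y (k+1) - y k) = v - y k from by abel] at hn
    rw [hn, I4]
    field_simp
  have K1 : ⟪p - x (k+1), h' (x k)⟫_ℝ + ⟪x (k+1) - x k, h' (x k)⟫_ℝ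
      = ⟪p - x k, h' (x k)⟫_ℝ := by
    rw [← inner_add_left, show p - x (k+1) + (x (k+1) - x k) = p - x k from by abel]
  have K2 : c * ⟪A (p - x (k+1)), A (x (k+1)) - (z k - c⁻¹ • y k)⟫_ℝ
      + c * ⟪z (k+1) - q, A (x (k+1)) - z (k+1) + c⁻¹ • y k⟫_ℝ
      + ⟪v, A (x (k+1)) - z (k+1)⟫_ℝ
      = ⟪y (k+1), A p - q⟫_ℝ + c * ⟪z (k+1) - z k, A (p - x (k+1))⟫_ℝ
      + ⟪v - y (k+1), A (x (k+1)) - z (k+1)⟫_ℝ := by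
    rw [hy k]
    simp only [map_sub, inner_sub_left, inner_sub_right, inner_add_left, inner_add_right,
      real_inner_smul_left, real_inner_smul_right]
    field_simp
    simp only [real_inner_comm (A (x (k+1))) (A p), real_inner_comm (A (x (k+1))) q,
      real_inner_comm (z (k+1)) q, real_inner_comm (z k) (A p),
      real_inner_comm (z k) (A (x (k+1))), real_inner_comm (A (x (k+1))) (z (k+1)),
      real_inner_comm (y k) (A p), real_inner_comm (y k) q,
      real_inner_comm (y k) (A (x (k+1))), real_inner_comm (y k) (z (k+1))]
    ring
  linarith [hFineq, hGineq, hconv1, hdesc, I1, I2, I3, K1, K2]
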